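/- Let F be a field, q ∈ F, f, g ∈ F[h] and λ ∈ F with λ ≠ 0. Then there is an F-algebra isomorphism H_q(f,g) ≅ H_q(λ f(λ^{-1}h), g(λ^{-1}h)) sending x ↦ x, y ↦ y and h ↦ λ^{-1}h. -/

import Mathlib

open Polynomial

/-- The three generators `x`, `y`, `h` of a quantum generalized Heisenberg algebra. -/
inductive QGHAGen : Type
  | x : QGHAGen
  | y : QGHAGen
  | h : QGHAGen

/-- The defining relations of the quantum generalized Heisenberg algebra `H_q(f,g)`:
`h*x = x*f(h)`, `y*h = f(h)*y`, and `y*x - q*(x*y) = g(h)`. -/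
inductive QGHARel (F : Type*) [Field F] (q : F) (f g : F[X]) :
    FreeAlgebra F QGHAGen → FreeAlgebra F QGHAGen → Prop
  | hx : QGHARel F q f g
      (FreeAlgebra.ι F QGHAGen.h * FreeAlgebra.ι F QGHAGen.x)
      (FreeAlgebra.ι F QGHAGen.x * aeval (FreeAlgebra.ι F QGHAGen.h) f)
  | yh : QGHARel F q f g
      (FreeAlgebra.ι F QGHAGen.y * FreeAlgebra.ι F QGHAGen.h)
      (aeval (FreeAlgebra.ι F QGHAGen.h) f * FreeAlgebra.ι F QGHAGen.y)
  | yx : QGHARel F q f g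
      (FreeAlgebra.ι F QGHAGen.y * FreeAlgebra.ι F QGHAGen.x)
      (q • (FreeAlgebra.ι F QGHAGen.x * FreeAlgebra.ι F QGHAGen.y)
        + aeval (FreeAlgebra.ι F QGHAGen.h) g)

/-- The quantum generalized Heisenberg algebra `H_q(f,g)`. -/
def QGHA (F : Type*) [Field F] (q : F) (f g : F[X]) : Type _ :=
  RingQuot (QGHARel F q f g)

namespace QGHA

variable {F : Type*} [Field F] (q : F) (f g : F[X])

instance : Ring (QGHA F q f g) :=
  inferInstanceAs (Ring (RingQuot (QGHARel F q f g)))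

instance : Algebra F (QGHA F q f g) :=
  inferInstanceAs (Algebra F (RingQuot (QGHARel F q f g)))

/-- The generator `x` of `H_q(f,g)`. -/
def x : QGHA F q f g :=
  RingQuot.mkAlgHom F (QGHARel F q f g) (FreeAlgebra.ι F QGHAGen.x)

/-- The generator `y` of `H_q(f,g)`. -/
def y : QGHA F q f g :=
  RingQuot.mkAlgHom F (QGHARel F q f g) (FreeAlgebra.ι F QGHAGen.y)

/-- The generator `h` of `H_q(f,g)`. -/
def h : QGHA F q f g :=
  RingQuot.mkAlgHom F (QGHARel F q f g) (FreeAlgebra.ι F QGHAGen.h)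

end QGHA


section Aux

variable {F : Type*} [Field F] {A : Type*} [Ring A] [Algebra F A]

lemma aeval_scale (lam : F) (f : F[X]) (a : A) :
    aeval a (C lam * f.comp (C lam⁻¹ * X)) = lam • aeval (lam⁻¹ • a) f := by
  rw [map_mul, aeval_C, aeval_comp, map_mul, aeval_C, aeval_X, Algebra.smul_def,
    Algebra.smul_def]

lemma aeval_comp_scale (lam : F) (g : F[X]) (a : A) :
    aeval a (g.comp (C lam⁻¹ * X)) = aeval (lam⁻¹ • a) g := by
  rw [aeval_comp, map_mul, aeval_C, aeval_X, Algebra.smul_def]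

variable (q : F) (f g : F[X])

lemma QGHA.hx_rel :
    QGHA.h q f g * QGHA.x q f g = QGHA.x q f g * aeval (QGHA.h q f g) f := by
  have := RingQuot.mkAlgHom_rel F (QGHARel.hx (F := F) (q := q) (f := f) (g := g))
  simp [QGHA.x, QGHA.h, map_mul, ← Polynomial.aeval_algHom_apply] at this ⊢
  exact this

lemma QGHA.yh_rel :
    QGHA.y q f g * QGHA.h q f g = aeval (QGHA.h q f g) f * QGHA.y q f g := by
  have := RingQuot.mkAlgHom_rel F (QGHARel.yh (F := F) (q := q) (f := f) (g := g))
  simp [QGHA.y, QGHA.h, map_mul, ← Polynomial.aeval_algHom_apply] at this ⊢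
  exact this

lemma QGHA.yx_rel :
    QGHA.y q f g * QGHA.x q f g =
      q • (QGHA.x q f g * QGHA.y q f g) + aeval (QGHA.h q f g) g := by
  have := RingQuot.mkAlgHom_rel F (QGHARel.yx (F := F) (q := q) (f := f) (g := g))
  simp [QGHA.x, QGHA.y, QGHA.h, map_mul, map_add, map_smul,
    ← Polynomial.aeval_algHom_apply] at this ⊢
  exact this

/-- A map on generators given three target elements. -/
noncomputable def QGHAGenMap (F : Type*) [Field F] {A : Type*} [Ring A] [Algebra F A]
    (X Y H : A) : QGHAGen → A
  | QGHAGen.x => X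
  | QGHAGen.y => Y
  | QGHAGen.h => H

end Aux

/-- For `λ ∈ F*` there is an `F`-algebra isomorphism
`H_q(f,g) ≅ H_q(λ f(λ⁻¹h), g(λ⁻¹h))` sending `x ↦ x`, `y ↦ y` and `h ↦ λ⁻¹h`. -/
theorem qgha_iso_scale_h {F : Type*} [Field F] (q : F) (f g : F[X]) (lam : F)
    (hlam : lam ≠ 0) :
    ∃ φ : QGHA F q f g ≃ₐ[F]
        QGHA F q (C lam * f.comp (C lam⁻¹ * X)) (g.comp (C lam⁻¹ * X)),
      φ (QGHA.x q f g) = QGHA.x q (C lam * f.comp (C lam⁻¹ * X)) (g.comp (C lam⁻¹ * X)) ∧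
      φ (QGHA.y q f g) = QGHA.y q (C lam * f.comp (C lam⁻¹ * X)) (g.comp (C lam⁻¹ * X)) ∧
      φ (QGHA.h q f g) =
        lam⁻¹ • QGHA.h q (C lam * f.comp (C lam⁻¹ * X)) (g.comp (C lam⁻¹ * X)) := by
  have hinv : lam⁻¹ * lam = 1 := inv_mul_cancel₀ hlam
  have hinv' : lam * lam⁻¹ = 1 := mul_inv_cancel₀ hlam
  have fwd_rel : ∀ ⦃a b : FreeAlgebra F QGHAGen⦄, QGHARel F q f g a b →
      FreeAlgebra.lift F (QGHAGenMap F
        (QGHA.x q (C lam * f.comp (C lam⁻¹ * X)) (g.comp (C lam⁻¹ * X)))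
        (QGHA.y q (C lam * f.comp (C lam⁻¹ * X)) (g.comp (C lam⁻¹ * X)))
        (lam⁻¹ • QGHA.h q (C lam * f.comp (C lam⁻¹ * X)) (g.comp (C lam⁻¹ * X)))) a =
      FreeAlgebra.lift F (QGHAGenMap F
        (QGHA.x q (C lam * f.comp (C lam⁻¹ * X)) (g.comp (C lam⁻¹ * X)))
        (QGHA.y q (C lam * f.comp (C lam⁻¹ * X)) (g.comp (C lam⁻¹ * X)))
        (lam⁻¹ • QGHA.h q (C lam * f.comp (C lam⁻¹ * X)) (g.comp (C lam⁻¹ * X)))) b := by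
    rintro a b ⟨⟩
    · simp only [map_mul, FreeAlgebra.lift_ι_apply, QGHAGenMap,
        ← Polynomial.aeval_algHom_apply]
      rw [smul_mul_assoc, QGHA.hx_rel, aeval_scale, mul_smul_comm, smul_smul, hinv, one_smul]
    · simp only [map_mul, FreeAlgebra.lift_ι_apply, QGHAGenMap,
        ← Polynomial.aeval_algHom_apply]
      rw [mul_smul_comm, QGHA.yh_rel, aeval_scale, smul_mul_assoc, smul_smul, hinv,
        one_smul]
    · simp only [map_mul, map_add, map_smul, FreeAlgebra.lift_ι_apply, QGHAGenMap,
        ← Polynomial.aeval_algHom_apply]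
      rw [QGHA.yx_rel, aeval_comp_scale]
  let fwd : QGHA F q f g →ₐ[F]
      QGHA F q (C lam * f.comp (C lam⁻¹ * X)) (g.comp (C lam⁻¹ * X)) :=
    RingQuot.liftAlgHom F ⟨_, fwd_rel⟩
  have bwd_rel : ∀ ⦃a b : FreeAlgebra F QGHAGen⦄,
      QGHARel F q (C lam * f.comp (C lam⁻¹ * X)) (g.comp (C lam⁻¹ * X)) a b →
      FreeAlgebra.lift F (QGHAGenMap F (QGHA.x q f g) (QGHA.y q f g)
        (lam • QGHA.h q f g)) a =
      FreeAlgebra.lift F (QGHAGenMap F (QGHA.x q f g) (QGHA.y q f g)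
        (lam • QGHA.h q f g)) b := by
    rintro a b ⟨⟩
    · simp only [map_mul, FreeAlgebra.lift_ι_apply, QGHAGenMap,
        ← Polynomial.aeval_algHom_apply]
      rw [aeval_C, aeval_comp_scale, smul_smul, hinv, one_smul, ← Algebra.smul_def,
        smul_mul_assoc, QGHA.hx_rel, mul_smul_comm]
    · simp only [map_mul, FreeAlgebra.lift_ι_apply, QGHAGenMap,
        ← Polynomial.aeval_algHom_apply]
      rw [aeval_C, aeval_comp_scale, smul_smul, hinv, one_smul, ← Algebra.smul_def,
        mul_smul_comm, QGHA.yh_rel, smul_mul_assoc]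
    · simp only [map_mul, map_add, map_smul, FreeAlgebra.lift_ι_apply, QGHAGenMap,
        ← Polynomial.aeval_algHom_apply]
      rw [aeval_comp_scale, smul_smul, hinv, one_smul, QGHA.yx_rel]
  let bwd : QGHA F q (C lam * f.comp (C lam⁻¹ * X)) (g.comp (C lam⁻¹ * X)) →ₐ[F]
      QGHA F q f g :=
    RingQuot.liftAlgHom F ⟨_, bwd_rel⟩
  have fwd_x : fwd (QGHA.x q f g) =
      QGHA.x q (C lam * f.comp (C lam⁻¹ * X)) (g.comp (C lam⁻¹ * X)) := by
    show RingQuot.liftAlgHom F ⟨_, fwd_rel⟩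
      (RingQuot.mkAlgHom F (QGHARel F q f g) (FreeAlgebra.ι F QGHAGen.x)) = _
    rw [RingQuot.liftAlgHom_mkAlgHom_apply, FreeAlgebra.lift_ι_apply]
    rfl
  have fwd_y : fwd (QGHA.y q f g) =
      QGHA.y q (C lam * f.comp (C lam⁻¹ * X)) (g.comp (C lam⁻¹ * X)) := by
    show RingQuot.liftAlgHom F ⟨_, fwd_rel⟩
      (RingQuot.mkAlgHom F (QGHARel F q f g) (FreeAlgebra.ι F QGHAGen.y)) = _
    rw [RingQuot.liftAlgHom_mkAlgHom_apply, FreeAlgebra.lift_ι_apply]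
    rfl
  have fwd_h : fwd (QGHA.h q f g) =
      lam⁻¹ • QGHA.h q (C lam * f.comp (C lam⁻¹ * X)) (g.comp (C lam⁻¹ * X)) := by
    show RingQuot.liftAlgHom F ⟨_, fwd_rel⟩
      (RingQuot.mkAlgHom F (QGHARel F q f g) (FreeAlgebra.ι F QGHAGen.h)) = _
    rw [RingQuot.liftAlgHom_mkAlgHom_apply, FreeAlgebra.lift_ι_apply]
    rfl
  have bwd_x : bwd (QGHA.x q (C lam * f.comp (C lam⁻¹ * X)) (g.comp (C lam⁻¹ * X))) =
      QGHA.x q f g := by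
    show RingQuot.liftAlgHom F ⟨_, bwd_rel⟩
      (RingQuot.mkAlgHom F (QGHARel F q (C lam * f.comp (C lam⁻¹ * X)) (g.comp (C lam⁻¹ * X)))
        (FreeAlgebra.ι F QGHAGen.x)) = _
    rw [RingQuot.liftAlgHom_mkAlgHom_apply, FreeAlgebra.lift_ι_apply]
    rfl
  have bwd_y : bwd (QGHA.y q (C lam * f.comp (C lam⁻¹ * X)) (g.comp (C lam⁻¹ * X))) =
      QGHA.y q f g := by
    show RingQuot.liftAlgHom F ⟨_, bwd_rel⟩
      (RingQuot.mkAlgHom F (QGHARel F q (C lam * f.comp (C lam⁻¹ * X)) (g.comp (C lam⁻¹ * X)))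
        (FreeAlgebra.ι F QGHAGen.y)) = _
    rw [RingQuot.liftAlgHom_mkAlgHom_apply, FreeAlgebra.lift_ι_apply]
    rfl
  have bwd_h : bwd (QGHA.h q (C lam * f.comp (C lam⁻¹ * X)) (g.comp (C lam⁻¹ * X))) =
      lam • QGHA.h q f g := by
    show RingQuot.liftAlgHom F ⟨_, bwd_rel⟩
      (RingQuot.mkAlgHom F (QGHARel F q (C lam * f.comp (C lam⁻¹ * X)) (g.comp (C lam⁻¹ * X)))
        (FreeAlgebra.ι F QGHAGen.h)) = _
    rw [RingQuot.liftAlgHom_mkAlgHom_apply, FreeAlgebra.lift_ι_apply]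
    rfl
  have hfb : fwd.comp bwd = AlgHom.id F _ := by
    apply RingQuot.ringQuot_ext'
    apply FreeAlgebra.hom_ext
    funext t
    cases t
    · show fwd (bwd (QGHA.x q (C lam * f.comp (C lam⁻¹ * X)) (g.comp (C lam⁻¹ * X)))) =
        QGHA.x q (C lam * f.comp (C lam⁻¹ * X)) (g.comp (C lam⁻¹ * X))
      rw [bwd_x, fwd_x]
    · show fwd (bwd (QGHA.y q (C lam * f.comp (C lam⁻¹ * X)) (g.comp (C lam⁻¹ * X)))) =
        QGHA.y q (C lam * f.comp (C lam⁻¹ * X)) (g.comp (C lam⁻¹ * X))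
      rw [bwd_y, fwd_y]
    · show fwd (bwd (QGHA.h q (C lam * f.comp (C lam⁻¹ * X)) (g.comp (C lam⁻¹ * X)))) =
        QGHA.h q (C lam * f.comp (C lam⁻¹ * X)) (g.comp (C lam⁻¹ * X))
      rw [bwd_h, map_smul, fwd_h, smul_smul, hinv', one_smul]
  have hbf : bwd.comp fwd = AlgHom.id F _ := by
    apply RingQuot.ringQuot_ext'
    apply FreeAlgebra.hom_ext
    funext t
    cases t
    · show bwd (fwd (QGHA.x q f g)) = QGHA.x q f g
      rw [fwd_x, bwd_x]
    · show bwd (fwd (QGHA.y q f g)) = QGHA.y q f g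
      rw [fwd_y, bwd_y]
    · show bwd (fwd (QGHA.h q f g)) = QGHA.h q f g
      rw [fwd_h, map_smul, bwd_h, smul_smul, hinv, one_smul]
  exact ⟨AlgEquiv.ofAlgHom fwd bwd hfb hbf, fwd_x, fwd_y, fwd_h⟩
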